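/- Let n > m_1 ≥ 1 be coprime integers, let m_2 be the unique integer with 0 < m_2 < n + 1 and m_1·m_2 ≡ 1 (mod n), and set c = (m_1·m_2 − 1)/n ∈ ℕ. Let H = {(u_1,u_2) ∈ ℕ² : u_1 + m_1·u_2 ≡ 0 (mod n)} and E = {(n,0),(0,n)}. Then (H,E) is a normal orthogonal semigroup of order n, and H has an AG witness (equivalently, H is an AG semigroup) if and only if c divides m_1 − 1 and c divides m_2 − 1 (when c = 0 this means m_1 = m_2 = 1). (Over a field containing a primitive n-th root of unity ξ, k[H] is the invariant ring of the cyclic group generated by diag(ξ, ξ^{m_1}) acting on k[t_1,t_2].) -/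

import Mathlib

open scoped Classical

namespace AGpaper

/-- The degree of an integer vector: sum of coordinates. -/
def degZ {d : ℕ} (x : Fin d → ℤ) : ℤ := ∑ i, x i

/-- An orthogonal semigroup of order `m` in `ℕ^d`. -/
def IsOrthogonal (d m : ℕ) (H : AddSubmonoid (Fin d → ℤ)) : Prop :=
  H.FG ∧
  (∀ x ∈ H, ∀ i, 0 ≤ x i) ∧
  (∀ i : Fin d, Pi.single i (m : ℤ) ∈ H) ∧
  (∃ n : ℕ, 0 < n ∧ ∀ x ∈ H, ∀ i, (m : ℤ) ∣ (n : ℤ) * x i) ∧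
  (∀ i : Fin d, ∀ m' : ℕ, 0 < m' → m' < m → Pi.single i (m' : ℤ) ∉ H)

/-- The Apéry set of an orthogonal semigroup w.r.t. its extreme rays `m eᵢ`. -/
def apery (d m : ℕ) (H : AddSubmonoid (Fin d → ℤ)) : Set (Fin d → ℤ) :=
  {x | x ∈ H ∧ ∀ i : Fin d, x - Pi.single i (m : ℤ) ∉ H}

/-- The socle: maximal elements of the Apéry set with respect to `≤_H`. -/
def soc (d m : ℕ) (H : AddSubmonoid (Fin d → ℤ)) : Set (Fin d → ℤ) :=
  {x | x ∈ apery d m H ∧ ∀ y ∈ apery d m H, y - x ∈ H → x = y}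

/-- `ω_H = {-w + m e₁ + ⋯ + m e_d + h : w ∈ Soc(H,E), h ∈ H}`. -/
def omegaH (d m : ℕ) (H : AddSubmonoid (Fin d → ℤ)) : Set (Fin d → ℤ) :=
  {x | ∃ w ∈ soc d m H, ∃ h ∈ H, x = -w + (fun _ => (m : ℤ)) + h}

/-- Normality of a submonoid of `ℤ^d`. -/
def IsNormalSg (d : ℕ) (H : AddSubmonoid (Fin d → ℤ)) : Prop :=
  ∀ g ∈ AddSubgroup.closure (H : Set (Fin d → ℤ)),
    (∃ n : ℕ, 1 ≤ n ∧ n • g ∈ H) → g ∈ H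

/-- An AG witness `w ∈ Soc(H,E)`. -/
def AGwitness (d m : ℕ) (H : AddSubmonoid (Fin d → ℤ)) (w : Fin d → ℤ) : Prop :=
  w ∈ soc d m H ∧
  (∀ h ∈ apery d m H, ((h ∈ soc d m H ∧ h ≠ w) ↔ w - h ∉ H)) ∧
  (∀ h ∈ soc d m H, h ≠ w →
    ∃ i : Fin d, ∃ h' ∈ soc d m H, h + h' = w + Pi.single i (m : ℤ))

/-- `x` is a minimal generator of `ω_H`. -/
def minGen (d m : ℕ) (H : AddSubmonoid (Fin d → ℤ)) (x : Fin d → ℤ) : Prop :=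
  x ∈ omegaH d m H ∧ ∀ h ∈ H, h ≠ 0 → x - h ∉ omegaH d m H

/-- The semigroup `H = {(u₁,u₂) ∈ ℕ² : u₁ + m₁·u₂ ≡ 0 (mod n)}` as a submonoid of `ℤ²`. -/
def Hnm (n m₁ : ℕ) : AddSubmonoid (Fin 2 → ℤ) where
  carrier := {x | (∀ i, 0 ≤ x i) ∧ (n : ℤ) ∣ (x 0 + (m₁ : ℤ) * x 1)}
  zero_mem' := by
    refine ⟨fun i => le_refl 0, ?_⟩
    simp
  add_mem' := by
    rintro a b ⟨ha1, ha2⟩ ⟨hb1, hb2⟩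
    refine ⟨fun i => add_nonneg (ha1 i) (hb1 i), ?_⟩
    have h : (a + b) 0 + (m₁ : ℤ) * (a + b) 1 =
        (a 0 + (m₁ : ℤ) * a 1) + (b 0 + (m₁ : ℤ) * b 1) := by
      simp [Pi.add_apply]; ring
    rw [h]
    exact dvd_add ha2 hb2

section Helpers

variable {n m₁ : ℕ}

lemma vec0 (a b : ℤ) : (![a, b]) 0 = a := rfl
lemma vec1 (a b : ℤ) : (![a, b]) 1 = b := rfl

lemma funext2 {x y : Fin 2 → ℤ} (h0 : x 0 = y 0) (h1 : x 1 = y 1) : x = y := by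
  funext i; fin_cases i <;> assumption

lemma mem_Hnm {x : Fin 2 → ℤ} :
    x ∈ Hnm n m₁ ↔ (0 ≤ x 0 ∧ 0 ≤ x 1) ∧ (n : ℤ) ∣ (x 0 + (m₁ : ℤ) * x 1) := by
  constructor
  · rintro ⟨ha, hb⟩; exact ⟨⟨ha 0, ha 1⟩, hb⟩
  · rintro ⟨⟨h0, h1⟩, hb⟩
    exact ⟨fun i => by fin_cases i <;> assumption, hb⟩

lemma int_bounded_eq {N a b : ℤ} (hd : N ∣ a - b) (ha0 : 0 ≤ a) (haN : a < N)
    (hb0 : 0 ≤ b) (hbN : b < N) : a = b := by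
  have := Int.eq_zero_of_abs_lt_dvd hd (by rw [abs_sub_lt_iff]; omega)
  omega

lemma sub_mem_Hnm {x y : Fin 2 → ℤ} (hx : x ∈ Hnm n m₁) (hy : y ∈ Hnm n m₁) :
    y - x ∈ Hnm n m₁ ↔ x 0 ≤ y 0 ∧ x 1 ≤ y 1 := by
  obtain ⟨-, hxd⟩ := mem_Hnm.1 hx
  obtain ⟨-, hyd⟩ := mem_Hnm.1 hy
  have e0 : (y - x) 0 = y 0 - x 0 := rfl
  have e1 : (y - x) 1 = y 1 - x 1 := rfl
  constructor
  · rintro h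
    obtain ⟨⟨ha, hb⟩, -⟩ := mem_Hnm.1 h
    rw [e0] at ha; rw [e1] at hb
    constructor <;> omega
  · rintro ⟨h0, h1⟩
    refine mem_Hnm.2 ⟨⟨by omega, by omega⟩, ?_⟩
    have : (y - x) 0 + (m₁ : ℤ) * (y - x) 1
        = (y 0 + (m₁ : ℤ) * y 1) - (x 0 + (m₁ : ℤ) * x 1) := by
      rw [e0, e1]; ring
    rw [this]
    exact dvd_sub hyd hxd

lemma single_mem_Hnm_aux (hx : (0:ℤ) < n) :
    ∀ i : Fin 2, Pi.single i (n : ℤ) ∈ Hnm n m₁ := by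
  intro i
  fin_cases i
  · refine mem_Hnm.2 ⟨⟨?_, ?_⟩, ?_⟩ <;> simp [Pi.single_apply]
  · refine mem_Hnm.2 ⟨⟨?_, ?_⟩, ?_⟩ <;> simp [Pi.single_apply]

lemma mem_apery_iff (hn : 0 < n) {x : Fin 2 → ℤ} :
    x ∈ apery 2 n (Hnm n m₁) ↔ x ∈ Hnm n m₁ ∧ x 0 < n ∧ x 1 < n := by
  have s00 : (x - Pi.single 0 (n:ℤ) : Fin 2 → ℤ) 0 = x 0 - n := by simp
  have s01 : (x - Pi.single 0 (n:ℤ) : Fin 2 → ℤ) 1 = x 1 := by simp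
  have s10 : (x - Pi.single 1 (n:ℤ) : Fin 2 → ℤ) 0 = x 0 := by simp
  have s11 : (x - Pi.single 1 (n:ℤ) : Fin 2 → ℤ) 1 = x 1 - n := by simp
  constructor
  · rintro ⟨hx, hsingle⟩
    obtain ⟨⟨h0, h1⟩, hd⟩ := mem_Hnm.1 hx
    refine ⟨hx, ?_, ?_⟩
    · by_contra hc
      push_neg at hc
      refine hsingle 0 (mem_Hnm.2 ⟨⟨?_, ?_⟩, ?_⟩)
      · rw [s00]; omega
      · rw [s01]; omega
      · rw [s00, s01]
        have : x 0 - (n:ℤ) + (m₁:ℤ) * x 1 = (x 0 + (m₁:ℤ) * x 1) - n := by ring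
        rw [this]
        exact dvd_sub hd dvd_rfl
    · by_contra hc
      push_neg at hc
      refine hsingle 1 (mem_Hnm.2 ⟨⟨?_, ?_⟩, ?_⟩)
      · rw [s10]; omega
      · rw [s11]; omega
      · rw [s10, s11]
        have : x 0 + (m₁:ℤ) * (x 1 - (n:ℤ)) = (x 0 + (m₁:ℤ) * x 1) - n * m₁ := by ring
        rw [this]
        exact dvd_sub hd ⟨m₁, rfl⟩
  · rintro ⟨hx, hb0, hb1⟩
    refine ⟨hx, Fin.forall_fin_two.2 ⟨?_, ?_⟩⟩
    · intro hmem
      obtain ⟨⟨h0, h1⟩, -⟩ := mem_Hnm.1 hmem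
      rw [s00] at h0; omega
    · intro hmem
      obtain ⟨⟨h0, h1⟩, -⟩ := mem_Hnm.1 hmem
      rw [s11] at h1; omega

lemma apery_subset_Hnm (hn : 0 < n) {x : Fin 2 → ℤ} (hx : x ∈ apery 2 n (Hnm n m₁)) :
    x ∈ Hnm n m₁ := hx.1

lemma mem_soc_iff (hn : 0 < n) {x : Fin 2 → ℤ} :
    x ∈ soc 2 n (Hnm n m₁) ↔ x ∈ apery 2 n (Hnm n m₁) ∧
      ∀ y ∈ apery 2 n (Hnm n m₁), x 0 ≤ y 0 → x 1 ≤ y 1 → x = y := by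
  constructor
  · rintro ⟨hx, hmax⟩
    exact ⟨hx, fun y hy h0 h1 =>
      hmax y hy ((sub_mem_Hnm hx.1 hy.1).2 ⟨h0, h1⟩)⟩
  · rintro ⟨hx, hmax⟩
    refine ⟨hx, fun y hy hsub => ?_⟩
    obtain ⟨h0, h1⟩ := (sub_mem_Hnm hx.1 hy.1).1 hsub
    exact hmax y hy h0 h1

lemma apery_ext_snd (hn : 0 < n) {x y : Fin 2 → ℤ}
    (hx : x ∈ apery 2 n (Hnm n m₁)) (hy : y ∈ apery 2 n (Hnm n m₁))
    (h : x 1 = y 1) : x = y := by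
  obtain ⟨hxH, hx0, hx1⟩ := (mem_apery_iff hn).1 hx
  obtain ⟨hyH, hy0, hy1⟩ := (mem_apery_iff hn).1 hy
  obtain ⟨⟨hxa, hxb⟩, hxd⟩ := mem_Hnm.1 hxH
  obtain ⟨⟨hya, hyb⟩, hyd⟩ := mem_Hnm.1 hyH
  refine funext2 ?_ h
  refine int_bounded_eq (N := n) ?_ hxa hx0 hya hy0
  have : x 0 - y 0 = (x 0 + (m₁:ℤ) * x 1) - (y 0 + (m₁:ℤ) * y 1) := by rw [h]; ring
  rw [this]; exact dvd_sub hxd hyd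

lemma apery_ext_fst (hn : 0 < n) (hcop : Nat.Coprime n m₁) {x y : Fin 2 → ℤ}
    (hx : x ∈ apery 2 n (Hnm n m₁)) (hy : y ∈ apery 2 n (Hnm n m₁))
    (h : x 0 = y 0) : x = y := by
  obtain ⟨hxH, hx0, hx1⟩ := (mem_apery_iff hn).1 hx
  obtain ⟨hyH, hy0, hy1⟩ := (mem_apery_iff hn).1 hy
  obtain ⟨⟨hxa, hxb⟩, hxd⟩ := mem_Hnm.1 hxH
  obtain ⟨⟨hya, hyb⟩, hyd⟩ := mem_Hnm.1 hyH
  refine funext2 h ?_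
  have hco : IsCoprime (n:ℤ) (m₁:ℤ) := Int.isCoprime_iff_gcd_eq_one.mpr hcop
  have hdvd : (n:ℤ) ∣ (m₁:ℤ) * (x 1 - y 1) := by
    have : (m₁:ℤ) * (x 1 - y 1) = (x 0 + (m₁:ℤ) * x 1) - (y 0 + (m₁:ℤ) * y 1) := by
      rw [h]; ring
    rw [this]; exact dvd_sub hxd hyd
  refine int_bounded_eq (N := n) (hco.dvd_of_dvd_mul_left hdvd) hxb hx1 hyb hy1

end Helpers
section MainLemmas

variable {n m₁ m₂ c : ℕ}

set_option maxHeartbeats 1000000 in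
lemma witness_of (h1 : 1 ≤ m₁) (h2 : m₁ < n) (hcop : Nat.Coprime n m₁)
    (hm₂ : 1 ≤ m₂) (hm₂n : m₂ < n) (hinv : m₁ * m₂ = n * c + 1)
    (k l : ℤ) (hk : 1 ≤ k) (hl : 1 ≤ l)
    (e1 : k + (m₁:ℤ) * l = n) (e2 : l + (m₂:ℤ) * k = n) :
    AGwitness 2 n (Hnm n m₁) ![(n:ℤ) - k, (n:ℤ) - l] := by
  have hn : 0 < n := by omega
  have hnZ : (0:ℤ) < n := by exact_mod_cast hn
  have hm₁Z : (1:ℤ) ≤ m₁ := by exact_mod_cast h1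
  have hm₁nZ : (m₁:ℤ) < n := by exact_mod_cast h2
  have hm₂Z : (1:ℤ) ≤ m₂ := by exact_mod_cast hm₂
  have hm₂nZ : (m₂:ℤ) < n := by exact_mod_cast hm₂n
  have hinvZ : (m₁:ℤ) * m₂ = (n:ℤ) * c + 1 := by exact_mod_cast hinv
  have hcZ : (0:ℤ) ≤ c := by positivity
  have hml : (1:ℤ) * 1 ≤ (m₁:ℤ) * l := mul_le_mul hm₁Z hl (by norm_num) (by linarith)
  have hmk : (1:ℤ) * 1 ≤ (m₂:ℤ) * k := mul_le_mul hm₂Z hk (by norm_num) (by linarith)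
  have hkn : k ≤ (n:ℤ) - 1 := by linarith
  have hln : l ≤ (n:ℤ) - 1 := by linarith
  -- S1 : value determined on high indices
  have S1 : ∀ x ∈ apery 2 n (Hnm n m₁), (n:ℤ) - l < x 1 → x 0 = (m₁:ℤ) * ((n:ℤ) - x 1) := by
    intro x hx hgt
    obtain ⟨hxH, hx0n, hx1n⟩ := (mem_apery_iff hn).1 hx
    obtain ⟨⟨hx0, hx1⟩, u, hu⟩ := mem_Hnm.1 hxH
    have ht2 : (n:ℤ) - x 1 ≤ l - 1 := by linarith
    have hb : (m₁:ℤ) * ((n:ℤ) - x 1) ≤ (m₁:ℤ) * (l - 1) :=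
      mul_le_mul_of_nonneg_left ht2 (by positivity)
    have hbn : (m₁:ℤ) * (l - 1) = (n:ℤ) - k - m₁ := by linear_combination e1
    refine int_bounded_eq (N := (n:ℤ)) ⟨u - m₁, by linear_combination hu⟩ hx0 hx0n
      (mul_nonneg (by positivity) (by linarith)) (by linarith)
  -- S2 : index determined on high values
  have S2 : ∀ x ∈ apery 2 n (Hnm n m₁), (n:ℤ) - k < x 0 → x 1 = (m₂:ℤ) * ((n:ℤ) - x 0) := by
    intro x hx hgt
    obtain ⟨hxH, hx0n, hx1n⟩ := (mem_apery_iff hn).1 hx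
    obtain ⟨⟨hx0, hx1⟩, u, hu⟩ := mem_Hnm.1 hxH
    have ht2 : (n:ℤ) - x 0 ≤ k - 1 := by linarith
    have hb : (m₂:ℤ) * ((n:ℤ) - x 0) ≤ (m₂:ℤ) * (k - 1) :=
      mul_le_mul_of_nonneg_left ht2 (by positivity)
    have hbn : (m₂:ℤ) * (k - 1) = (n:ℤ) - l - m₂ := by linear_combination e2
    refine int_bounded_eq (N := (n:ℤ))
      ⟨(m₂:ℤ) * u - (c:ℤ) * x 1 - m₂, by linear_combination (m₂:ℤ) * hu - (x 1) * hinvZ⟩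
      hx1 hx1n (mul_nonneg (by positivity) (by linarith)) (by linarith)
  -- S3 : high index implies socle
  have S3 : ∀ x ∈ apery 2 n (Hnm n m₁), (n:ℤ) - l < x 1 → x ∈ soc 2 n (Hnm n m₁) := by
    intro x hx hgt
    refine (mem_soc_iff hn).2 ⟨hx, ?_⟩
    intro y hy h0 h1
    have hy1 : (n:ℤ) - l < y 1 := lt_of_lt_of_le hgt h1
    have ex := S1 x hx hgt
    have ey := S1 y hy hy1
    have hle : (n:ℤ) - x 1 ≤ (n:ℤ) - y 1 :=
      le_of_mul_le_mul_left (by linarith) (by linarith : (0:ℤ) < m₁)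
    exact apery_ext_snd hn hx hy (by linarith)
  -- S4 : high value implies socle
  have S4 : ∀ x ∈ apery 2 n (Hnm n m₁), (n:ℤ) - k < x 0 → x ∈ soc 2 n (Hnm n m₁) := by
    intro x hx hgt
    refine (mem_soc_iff hn).2 ⟨hx, ?_⟩
    intro y hy h0 h1
    have hy0 : (n:ℤ) - k < y 0 := lt_of_lt_of_le hgt h0
    have ex := S2 x hx hgt
    have ey := S2 y hy hy0
    have hle : (n:ℤ) - x 0 ≤ (n:ℤ) - y 0 :=
      le_of_mul_le_mul_left (by linarith) (by linarith : (0:ℤ) < m₂)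
    exact apery_ext_fst hn hcop hx hy (by linarith)
  -- w in apery
  have wA : (![(n:ℤ) - k, (n:ℤ) - l]) ∈ apery 2 n (Hnm n m₁) := by
    have hdvd : (n:ℤ) ∣ (((n:ℤ) - k) + (m₁:ℤ) * ((n:ℤ) - l)) := ⟨(m₁:ℤ), by linear_combination -e1⟩
    refine (mem_apery_iff hn).2 ⟨mem_Hnm.2 ⟨⟨?_, ?_⟩, ?_⟩, ?_, ?_⟩ <;>
      simp only [Matrix.cons_val_zero, Matrix.cons_val_one, Matrix.head_cons] <;>
      first
        | linarith
        | exact hdvd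
  have w0 : (![(n:ℤ) - k, (n:ℤ) - l]) 0 = (n:ℤ) - k := rfl
  have w1 : (![(n:ℤ) - k, (n:ℤ) - l]) 1 = (n:ℤ) - l := rfl
  -- w in soc
  have wS : (![(n:ℤ) - k, (n:ℤ) - l]) ∈ soc 2 n (Hnm n m₁) := by
    refine (mem_soc_iff hn).2 ⟨wA, ?_⟩
    intro y hy h0 h1
    rw [w0] at h0
    rw [w1] at h1
    by_cases hgt : (n:ℤ) - l < y 1
    · exfalso
      have ey := S1 y hy hgt
      have ht2 : (n:ℤ) - y 1 ≤ l - 1 := by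
        obtain ⟨-, -, hy1n⟩ := (mem_apery_iff hn).1 hy
        linarith
      have hb : (m₁:ℤ) * ((n:ℤ) - y 1) ≤ (m₁:ℤ) * (l - 1) :=
        mul_le_mul_of_nonneg_left ht2 (by positivity)
      have hbn : (m₁:ℤ) * (l - 1) = (n:ℤ) - k - m₁ := by linear_combination e1
      linarith
    · exact apery_ext_snd hn wA hy (by rw [w1]; linarith)
  refine ⟨wS, ?_, ?_⟩
  · -- condition (i)
    intro h hA
    constructor
    · rintro ⟨hS, hne⟩ hmem
      obtain ⟨ha, hb⟩ := (sub_mem_Hnm hA.1 wA.1).1 hmem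
      exact hne (((mem_soc_iff hn).1 hS).2 _ wA ha hb)
    · intro hns
      have hne : h ≠ ![(n:ℤ) - k, (n:ℤ) - l] := by
        rintro rfl
        exact hns (by rw [sub_self]; exact (Hnm n m₁).zero_mem)
      refine ⟨?_, hne⟩
      have hnotle : ¬(h 0 ≤ (n:ℤ) - k ∧ h 1 ≤ (n:ℤ) - l) := by
        rintro ⟨ha, hb⟩
        exact hns ((sub_mem_Hnm hA.1 wA.1).2 ⟨by rw [w0]; exact ha, by rw [w1]; exact hb⟩)
      by_cases hc1 : (n:ℤ) - l < h 1
      · exact S3 h hA hc1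
      · push_neg at hc1
        have hc2 : (n:ℤ) - k < h 0 := by
          by_contra hc
          push_neg at hc
          exact hnotle ⟨hc, hc1⟩
        exact S4 h hA hc2
  · -- condition (ii)
    intro h hS hne
    have hA := ((mem_soc_iff hn).1 hS).1
    obtain ⟨hH, hh0n, hh1n⟩ := (mem_apery_iff hn).1 hA
    obtain ⟨⟨hh0, hh1⟩, -⟩ := mem_Hnm.1 hH
    have hnotle : ¬(h 0 ≤ (n:ℤ) - k ∧ h 1 ≤ (n:ℤ) - l) := by
      rintro ⟨ha, hb⟩
      exact hne (((mem_soc_iff hn).1 hS).2 _ wA (by rw [w0]; exact ha) (by rw [w1]; exact hb))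
    by_cases hc1 : (n:ℤ) - l < h 1
    · -- use i = 1
      have hx0 : h 0 = (m₁:ℤ) * ((n:ℤ) - h 1) := S1 h hA hc1
      have ht1 : 1 ≤ (n:ℤ) - h 1 := by linarith
      have ht2 : (n:ℤ) - h 1 ≤ l - 1 := by linarith
      have hb : (m₁:ℤ) * ((n:ℤ) - h 1) ≤ (m₁:ℤ) * (l - 1) :=
        mul_le_mul_of_nonneg_left ht2 (by positivity)
      have hb1 : (m₁:ℤ) * 1 ≤ (m₁:ℤ) * ((n:ℤ) - h 1) :=
        mul_le_mul_of_nonneg_left ht1 (by positivity)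
      have hbn : (m₁:ℤ) * (l - 1) = (n:ℤ) - k - m₁ := by linear_combination e1
      refine ⟨1, ![(n:ℤ) - k - (m₁:ℤ) * ((n:ℤ) - h 1), (n:ℤ) - h 1 + ((n:ℤ) - l)], ?_, ?_⟩
      · have hA' : (![(n:ℤ) - k - (m₁:ℤ) * ((n:ℤ) - h 1), (n:ℤ) - h 1 + ((n:ℤ) - l)])
            ∈ apery 2 n (Hnm n m₁) := by
          have hdvd : (n:ℤ) ∣ (((n:ℤ) - k - (m₁:ℤ) * ((n:ℤ) - h 1))
              + (m₁:ℤ) * ((n:ℤ) - h 1 + ((n:ℤ) - l))) := ⟨(m₁:ℤ), by linear_combination -e1⟩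
          refine (mem_apery_iff hn).2 ⟨mem_Hnm.2 ⟨⟨?_, ?_⟩, ?_⟩, ?_, ?_⟩ <;>
            simp only [Matrix.cons_val_zero, Matrix.cons_val_one, Matrix.head_cons] <;>
            first
              | linarith
              | exact hdvd
        exact S3 _ hA' (by
          show (n:ℤ) - l < (n:ℤ) - h 1 + ((n:ℤ) - l)
          linarith)
      · apply funext2
        · show h 0 + ((n:ℤ) - k - (m₁:ℤ) * ((n:ℤ) - h 1))
            = (![(n:ℤ) - k, (n:ℤ) - l] + Pi.single 1 (n:ℤ) : Fin 2 → ℤ) 0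
          have : (![(n:ℤ) - k, (n:ℤ) - l] + Pi.single 1 (n:ℤ) : Fin 2 → ℤ) 0
              = (n:ℤ) - k := by simp
          rw [this]
          linarith
        · show h 1 + ((n:ℤ) - h 1 + ((n:ℤ) - l))
            = (![(n:ℤ) - k, (n:ℤ) - l] + Pi.single 1 (n:ℤ) : Fin 2 → ℤ) 1
          have : (![(n:ℤ) - k, (n:ℤ) - l] + Pi.single 1 (n:ℤ) : Fin 2 → ℤ) 1
              = (n:ℤ) - l + n := by simp
          rw [this]
          ring
    · -- use i = 0
      push_neg at hc1
      have hc2 : (n:ℤ) - k < h 0 := by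
        by_contra hc
        push_neg at hc
        exact hnotle ⟨hc, hc1⟩
      have hx1 : h 1 = (m₂:ℤ) * ((n:ℤ) - h 0) := S2 h hA hc2
      have ht1 : 1 ≤ (n:ℤ) - h 0 := by linarith
      have ht2 : (n:ℤ) - h 0 ≤ k - 1 := by linarith
      have hb : (m₂:ℤ) * ((n:ℤ) - h 0) ≤ (m₂:ℤ) * (k - 1) :=
        mul_le_mul_of_nonneg_left ht2 (by positivity)
      have hb1 : (m₂:ℤ) * 1 ≤ (m₂:ℤ) * ((n:ℤ) - h 0) :=
        mul_le_mul_of_nonneg_left ht1 (by positivity)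
      have hbn : (m₂:ℤ) * (k - 1) = (n:ℤ) - l - m₂ := by linear_combination e2
      refine ⟨0, ![(n:ℤ) - k + ((n:ℤ) - h 0), (n:ℤ) - l - (m₂:ℤ) * ((n:ℤ) - h 0)], ?_, ?_⟩
      · have hA' : (![(n:ℤ) - k + ((n:ℤ) - h 0), (n:ℤ) - l - (m₂:ℤ) * ((n:ℤ) - h 0)])
            ∈ apery 2 n (Hnm n m₁) := by
          have hdvd : (n:ℤ) ∣ (((n:ℤ) - k + ((n:ℤ) - h 0))
              + (m₁:ℤ) * ((n:ℤ) - l - (m₂:ℤ) * ((n:ℤ) - h 0)))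
            := ⟨(m₁:ℤ) - (c:ℤ) * ((n:ℤ) - h 0),
                by linear_combination -e1 - ((n:ℤ) - h 0) * hinvZ⟩
          refine (mem_apery_iff hn).2 ⟨mem_Hnm.2 ⟨⟨?_, ?_⟩, ?_⟩, ?_, ?_⟩ <;>
            simp only [Matrix.cons_val_zero, Matrix.cons_val_one, Matrix.head_cons] <;>
            first
              | linarith
              | exact hdvd
        exact S4 _ hA' (by
          show (n:ℤ) - k < (n:ℤ) - k + ((n:ℤ) - h 0)
          linarith)
      · apply funext2
        · show h 0 + ((n:ℤ) - k + ((n:ℤ) - h 0))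
            = (![(n:ℤ) - k, (n:ℤ) - l] + Pi.single 0 (n:ℤ) : Fin 2 → ℤ) 0
          have : (![(n:ℤ) - k, (n:ℤ) - l] + Pi.single 0 (n:ℤ) : Fin 2 → ℤ) 0
              = (n:ℤ) - k + n := by simp
          rw [this]
          ring
        · show h 1 + ((n:ℤ) - l - (m₂:ℤ) * ((n:ℤ) - h 0))
            = (![(n:ℤ) - k, (n:ℤ) - l] + Pi.single 0 (n:ℤ) : Fin 2 → ℤ) 1
          have : (![(n:ℤ) - k, (n:ℤ) - l] + Pi.single 0 (n:ℤ) : Fin 2 → ℤ) 1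
              = (n:ℤ) - l := by simp
          rw [this]
          linarith

set_option maxHeartbeats 1000000 in
lemma exists_kl_of_witness (h1 : 1 ≤ m₁) (h2 : m₁ < n) (hcop : Nat.Coprime n m₁)
    (hm₂ : 1 ≤ m₂) (hm₂n : m₂ < n) (hinv : m₁ * m₂ = n * c + 1)
    (w : Fin 2 → ℤ) (hw : AGwitness 2 n (Hnm n m₁) w) :
    ∃ k l : ℤ, 1 ≤ k ∧ 1 ≤ l ∧ k + (m₁:ℤ) * l = n ∧ l + (m₂:ℤ) * k = n := by
  have hn : 0 < n := by omega
  have hnZ : (0:ℤ) < n := by exact_mod_cast hn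
  have hm₁Z : (1:ℤ) ≤ m₁ := by exact_mod_cast h1
  have hm₁nZ : (m₁:ℤ) < n := by exact_mod_cast h2
  have hm₂Z : (1:ℤ) ≤ m₂ := by exact_mod_cast hm₂
  have hm₂nZ : (m₂:ℤ) < n := by exact_mod_cast hm₂n
  have hinvZ : (m₁:ℤ) * m₂ = (n:ℤ) * c + 1 := by exact_mod_cast hinv
  have hcZ : (0:ℤ) ≤ c := by positivity
  obtain ⟨hwS, hi, -⟩ := hw
  obtain ⟨hwA, hmax⟩ := (mem_soc_iff hn).1 hwS
  obtain ⟨hwH, hw0n, hw1n⟩ := (mem_apery_iff hn).1 hwA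
  obtain ⟨⟨hw0, hw1⟩, u, hu⟩ := mem_Hnm.1 hwH
  -- the element (m₁, n-1) of the apery set
  have YA : (![(m₁:ℤ), (n:ℤ) - 1]) ∈ apery 2 n (Hnm n m₁) := by
    refine (mem_apery_iff hn).2 ⟨mem_Hnm.2 ⟨⟨?_, ?_⟩, ⟨(m₁:ℤ), ?_⟩⟩, ?_, ?_⟩ <;>
      simp only [Matrix.cons_val_zero, Matrix.cons_val_one, Matrix.head_cons] <;>
      first
        | linarith
        | ring
  have T1 : 1 ≤ w 1 := by
    by_contra hc
    push_neg at hc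
    have hw10 : w 1 = 0 := by omega
    have hw00 : w 0 = 0 := by
      refine int_bounded_eq (N := (n:ℤ)) ⟨u, ?_⟩ hw0 hw0n le_rfl hnZ
      rw [hw10] at hu; linear_combination hu
    have := hmax _ YA (by rw [hw00]; show (0:ℤ) ≤ m₁; linarith)
      (by rw [hw10]; show (0:ℤ) ≤ (n:ℤ) - 1; linarith)
    have := congrFun this 1
    simp only [Matrix.cons_val_one, Matrix.head_cons, Matrix.cons_val_zero] at this
    omega
  have T1' : 1 ≤ w 0 := by
    by_contra hc
    push_neg at hc
    have hw00 : w 0 = 0 := by omega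
    have hco : IsCoprime (n:ℤ) (m₁:ℤ) := Int.isCoprime_iff_gcd_eq_one.mpr hcop
    have hdvd : (n:ℤ) ∣ (m₁:ℤ) * w 1 := ⟨u, by rw [hw00] at hu; linarith⟩
    have hd2 : (n:ℤ) ∣ w 1 - 0 := by simpa using hco.dvd_of_dvd_mul_left hdvd
    have : w 1 = 0 := int_bounded_eq (N := (n:ℤ)) hd2 hw1 hw1n le_rfl hnZ
    omega
  -- first equation
  obtain ⟨q, hq⟩ : (n:ℤ) ∣ ((n:ℤ) - w 0) + (m₁:ℤ) * ((n:ℤ) - w 1) :=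
    ⟨1 + m₁ - u, by linear_combination -hu⟩
  have hq1 : 1 ≤ q := by
    by_contra hc
    push_neg at hc
    have h0 : (n:ℤ) * q ≤ 0 := mul_nonpos_of_nonneg_of_nonpos hnZ.le (by omega)
    have hb : (m₁:ℤ) * 1 ≤ (m₁:ℤ) * ((n:ℤ) - w 1) :=
      mul_le_mul_of_nonneg_left (by linarith) (by positivity)
    linarith
  have hQ : q = 1 := by
    by_contra hqne
    have hq2 : 2 ≤ q := by omega
    have hnq : (n:ℤ) * 2 ≤ (n:ℤ) * q := mul_le_mul_of_nonneg_left hq2 hnZ.le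
    have hml : (n:ℤ) + w 0 ≤ (m₁:ℤ) * ((n:ℤ) - w 1) := by linarith
    have hL2 : 2 ≤ (n:ℤ) - w 1 := by
      by_contra hc
      push_neg at hc
      have : (m₁:ℤ) * ((n:ℤ) - w 1) ≤ (m₁:ℤ) * 1 :=
        mul_le_mul_of_nonneg_left (by omega) (by positivity)
      linarith
    by_cases hcase : (m₁:ℤ) * ((n:ℤ) - w 1 - 1) ≤ (n:ℤ) - 1
    · -- no wraparound: contradict q ≥ 2 via w ∈ soc
      have yA : (![(m₁:ℤ) * ((n:ℤ) - w 1 - 1), w 1 + 1]) ∈ apery 2 n (Hnm n m₁) := by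
        refine (mem_apery_iff hn).2 ⟨mem_Hnm.2 ⟨⟨?_, ?_⟩, ⟨(m₁:ℤ), ?_⟩⟩, ?_, ?_⟩ <;>
          simp only [Matrix.cons_val_zero, Matrix.cons_val_one, Matrix.head_cons]
        · exact mul_nonneg (by positivity) (by linarith)
        · linarith
        · ring
        · linarith
        · linarith
      have hnotle : ¬ (w 0 ≤ (m₁:ℤ) * ((n:ℤ) - w 1 - 1)) := by
        intro hle
        have := hmax _ yA (by exact hle) (by show w 1 ≤ w 1 + 1; linarith)
        have := congrFun this 1
        simp only [Matrix.cons_val_one, Matrix.head_cons, Matrix.cons_val_zero] at this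
        omega
      push_neg at hnotle
      have hexp : (m₁:ℤ) * ((n:ℤ) - w 1) = (m₁:ℤ) * ((n:ℤ) - w 1 - 1) + m₁ := by ring
      linarith
    · -- wraparound: produce a non-socle element violating (i)
      push_neg at hcase
      set t₀ : ℤ := ((n:ℤ) - 1) / m₁ with ht₀
      set r : ℤ := ((n:ℤ) - 1) % m₁ with hr
      have hdm : (m₁:ℤ) * t₀ + r = (n:ℤ) - 1 := Int.mul_ediv_add_emod _ _
      have hr0 : 0 ≤ r := Int.emod_nonneg _ (by positivity)
      have hrm : r < m₁ := Int.emod_lt_of_pos _ (by linarith)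
      have ht₀1 : 1 ≤ t₀ := by
        by_contra hc
        push_neg at hc
        have : (m₁:ℤ) * t₀ ≤ 0 := mul_nonpos_of_nonneg_of_nonpos (by positivity) (by omega)
        linarith
      have ht₀L : t₀ + 1 ≤ (n:ℤ) - w 1 - 1 := by
        have : (m₁:ℤ) * t₀ < (m₁:ℤ) * ((n:ℤ) - w 1 - 1) := by linarith
        have := lt_of_mul_lt_mul_left this (by positivity : (0:ℤ) ≤ m₁)
        omega
      have hexp : (m₁:ℤ) * (t₀ + 1) = (m₁:ℤ) * t₀ + m₁ := by ring
      have xA : (![(m₁:ℤ) * (t₀ + 1) - n, (n:ℤ) - t₀ - 1]) ∈ apery 2 n (Hnm n m₁) := by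
        refine (mem_apery_iff hn).2 ⟨mem_Hnm.2 ⟨⟨?_, ?_⟩, ⟨(m₁:ℤ) - 1, ?_⟩⟩, ?_, ?_⟩ <;>
          simp only [Matrix.cons_val_zero, Matrix.cons_val_one, Matrix.head_cons] <;>
          first
            | linarith
            | ring
      have yA : (![(m₁:ℤ) * t₀, (n:ℤ) - t₀]) ∈ apery 2 n (Hnm n m₁) := by
        refine (mem_apery_iff hn).2 ⟨mem_Hnm.2 ⟨⟨?_, ?_⟩, ⟨(m₁:ℤ), ?_⟩⟩, ?_, ?_⟩ <;>
          simp only [Matrix.cons_val_zero, Matrix.cons_val_one, Matrix.head_cons] <;>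
          first
            | linarith
            | ring
      have xnots : (![(m₁:ℤ) * (t₀ + 1) - n, (n:ℤ) - t₀ - 1]) ∉ soc 2 n (Hnm n m₁) := by
        intro xS
        have := ((mem_soc_iff hn).1 xS).2 _ yA
          (by show (m₁:ℤ) * (t₀ + 1) - n ≤ (m₁:ℤ) * t₀; linarith)
          (by show (n:ℤ) - t₀ - 1 ≤ (n:ℤ) - t₀; linarith)
        have := congrFun this 1
        simp only [Matrix.cons_val_one, Matrix.head_cons, Matrix.cons_val_zero] at this
        omega
      have hwx : w - (![(m₁:ℤ) * (t₀ + 1) - n, (n:ℤ) - t₀ - 1]) ∈ Hnm n m₁ := by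
        by_contra hcon
        exact xnots ((hi _ xA).2 hcon).1
      have := ((sub_mem_Hnm xA.1 hwH).1 hwx).2
      simp only [Matrix.cons_val_one, Matrix.head_cons, Matrix.cons_val_zero] at this
      omega
  -- second equation
  obtain ⟨q', hq'⟩ : (n:ℤ) ∣ ((n:ℤ) - w 1) + (m₂:ℤ) * ((n:ℤ) - w 0) :=
    ⟨1 + m₂ - m₂ * u + c * w 1, by linear_combination -(m₂:ℤ) * hu + (w 1) * hinvZ⟩
  have hq'1 : 1 ≤ q' := by
    by_contra hc
    push_neg at hc
    have h0 : (n:ℤ) * q' ≤ 0 := mul_nonpos_of_nonneg_of_nonpos hnZ.le (by omega)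
    have hb : (m₂:ℤ) * 1 ≤ (m₂:ℤ) * ((n:ℤ) - w 0) :=
      mul_le_mul_of_nonneg_left (by linarith) (by positivity)
    linarith
  have hQ' : q' = 1 := by
    by_contra hqne
    have hq2 : 2 ≤ q' := by omega
    have hnq : (n:ℤ) * 2 ≤ (n:ℤ) * q' := mul_le_mul_of_nonneg_left hq2 hnZ.le
    have hml : (n:ℤ) + w 1 ≤ (m₂:ℤ) * ((n:ℤ) - w 0) := by linarith
    have hK2 : 2 ≤ (n:ℤ) - w 0 := by
      by_contra hc
      push_neg at hc
      have : (m₂:ℤ) * ((n:ℤ) - w 0) ≤ (m₂:ℤ) * 1 :=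
        mul_le_mul_of_nonneg_left (by omega) (by positivity)
      linarith
    by_cases hcase : (m₂:ℤ) * ((n:ℤ) - w 0 - 1) ≤ (n:ℤ) - 1
    · have yA : (![w 0 + 1, (m₂:ℤ) * ((n:ℤ) - w 0 - 1)]) ∈ apery 2 n (Hnm n m₁) := by
        refine (mem_apery_iff hn).2 ⟨mem_Hnm.2 ⟨⟨?_, ?_⟩,
          ⟨1 + (c:ℤ) * ((n:ℤ) - w 0 - 1), ?_⟩⟩, ?_, ?_⟩ <;>
          simp only [Matrix.cons_val_zero, Matrix.cons_val_one, Matrix.head_cons]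
        · linarith
        · exact mul_nonneg (by positivity) (by linarith)
        · linear_combination ((n:ℤ) - w 0 - 1) * hinvZ
        · linarith
        · linarith
      have hnotle : ¬ (w 1 ≤ (m₂:ℤ) * ((n:ℤ) - w 0 - 1)) := by
        intro hle
        have := hmax _ yA (by show w 0 ≤ w 0 + 1; linarith) (by exact hle)
        have := congrFun this 0
        simp only [Matrix.cons_val_zero] at this
        omega
      push_neg at hnotle
      have hexp : (m₂:ℤ) * ((n:ℤ) - w 0) = (m₂:ℤ) * ((n:ℤ) - w 0 - 1) + m₂ := by ring
      linarith
    · push_neg at hcase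
      set t₀ : ℤ := ((n:ℤ) - 1) / m₂ with ht₀
      set r : ℤ := ((n:ℤ) - 1) % m₂ with hr
      have hdm : (m₂:ℤ) * t₀ + r = (n:ℤ) - 1 := Int.mul_ediv_add_emod _ _
      have hr0 : 0 ≤ r := Int.emod_nonneg _ (by positivity)
      have hrm : r < m₂ := Int.emod_lt_of_pos _ (by linarith)
      have ht₀1 : 1 ≤ t₀ := by
        by_contra hc
        push_neg at hc
        have : (m₂:ℤ) * t₀ ≤ 0 := mul_nonpos_of_nonneg_of_nonpos (by positivity) (by omega)
        linarith
      have ht₀K : t₀ + 1 ≤ (n:ℤ) - w 0 - 1 := by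
        have : (m₂:ℤ) * t₀ < (m₂:ℤ) * ((n:ℤ) - w 0 - 1) := by linarith
        have := lt_of_mul_lt_mul_left this (by positivity : (0:ℤ) ≤ m₂)
        omega
      have hexp : (m₂:ℤ) * (t₀ + 1) = (m₂:ℤ) * t₀ + m₂ := by ring
      have xA : (![(n:ℤ) - t₀ - 1, (m₂:ℤ) * (t₀ + 1) - n]) ∈ apery 2 n (Hnm n m₁) := by
        refine (mem_apery_iff hn).2 ⟨mem_Hnm.2 ⟨⟨?_, ?_⟩,
          ⟨1 + (c:ℤ) * (t₀ + 1) - m₁, ?_⟩⟩, ?_, ?_⟩ <;>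
          simp only [Matrix.cons_val_zero, Matrix.cons_val_one, Matrix.head_cons] <;>
          first
            | linarith
            | linear_combination (t₀ + 1) * hinvZ
      have yA : (![(n:ℤ) - t₀, (m₂:ℤ) * t₀]) ∈ apery 2 n (Hnm n m₁) := by
        refine (mem_apery_iff hn).2 ⟨mem_Hnm.2 ⟨⟨?_, ?_⟩,
          ⟨1 + (c:ℤ) * t₀, ?_⟩⟩, ?_, ?_⟩ <;>
          simp only [Matrix.cons_val_zero, Matrix.cons_val_one, Matrix.head_cons] <;>
          first
            | linarith
            | linear_combination t₀ * hinvZ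
      have xnots : (![(n:ℤ) - t₀ - 1, (m₂:ℤ) * (t₀ + 1) - n]) ∉ soc 2 n (Hnm n m₁) := by
        intro xS
        have := ((mem_soc_iff hn).1 xS).2 _ yA
          (by show (n:ℤ) - t₀ - 1 ≤ (n:ℤ) - t₀; linarith)
          (by show (m₂:ℤ) * (t₀ + 1) - n ≤ (m₂:ℤ) * t₀; linarith)
        have := congrFun this 0
        simp only [Matrix.cons_val_zero] at this
        omega
      have hwx : w - (![(n:ℤ) - t₀ - 1, (m₂:ℤ) * (t₀ + 1) - n]) ∈ Hnm n m₁ := by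
        by_contra hcon
        exact xnots ((hi _ xA).2 hcon).1
      have := ((sub_mem_Hnm xA.1 hwH).1 hwx).1
      simp only [Matrix.cons_val_zero] at this
      omega
  rw [hQ] at hq
  rw [hQ'] at hq'
  exact ⟨(n:ℤ) - w 0, (n:ℤ) - w 1, by linarith, by linarith, by linarith, by linarith⟩

lemma Hnm_fg (hn : 0 < n) : (Hnm n m₁).FG := by
  classical
  set S : Finset (Fin 2 → ℤ) :=
    (Finset.Icc (fun _ => (0:ℤ)) (fun _ => (n:ℤ))).filter (· ∈ Hnm n m₁) with hS
  have hnZ : (0:ℤ) < n := by exact_mod_cast hn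
  have hmemS : ∀ x, x ∈ Hnm n m₁ → x 0 ≤ n → x 1 ≤ n → x ∈ S := by
    intro x hx hx0 hx1
    obtain ⟨⟨h0, h1⟩, -⟩ := mem_Hnm.1 hx
    rw [hS, Finset.mem_filter, Finset.mem_Icc]
    refine ⟨⟨?_, ?_⟩, hx⟩ <;> rw [Pi.le_def] <;>
      refine Fin.forall_fin_two.2 ⟨?_, ?_⟩ <;> assumption
  have hsingle0 : Pi.single (0 : Fin 2) (n:ℤ) ∈ S := by
    refine hmemS _ (single_mem_Hnm_aux hnZ 0) ?_ ?_ <;> simp [Pi.single_apply]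
  have hsingle1 : Pi.single (1 : Fin 2) (n:ℤ) ∈ S := by
    refine hmemS _ (single_mem_Hnm_aux hnZ 1) ?_ ?_ <;> simp [Pi.single_apply]
  refine ⟨S, le_antisymm ?_ ?_⟩
  · rw [AddSubmonoid.closure_le]
    intro x hx
    rw [hS] at hx
    exact (Finset.mem_filter.1 hx).2
  · intro x hx
    obtain ⟨N, hN⟩ : ∃ N : ℕ, (x 0 + x 1).toNat ≤ N := ⟨_, le_rfl⟩
    induction N generalizing x with
    | zero =>
      obtain ⟨⟨h0, h1⟩, -⟩ := mem_Hnm.1 hx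
      exact AddSubmonoid.subset_closure (hmemS x hx (by omega) (by omega))
    | succ N ih =>
      obtain ⟨⟨h0, h1⟩, hd⟩ := mem_Hnm.1 hx
      by_cases hb0 : (n:ℤ) < x 0
      · set y : Fin 2 → ℤ := x - Pi.single 0 (n:ℤ) with hy
        have s00 : y 0 = x 0 - n := by rw [hy]; simp
        have s01 : y 1 = x 1 := by rw [hy]; simp
        have hyH : y ∈ Hnm n m₁ := by
          refine mem_Hnm.2 ⟨⟨by omega, by omega⟩, ?_⟩
          rw [s00, s01]
          have : x 0 - (n:ℤ) + (m₁:ℤ) * x 1 = (x 0 + (m₁:ℤ) * x 1) - n := by ring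
          rw [this]
          exact dvd_sub hd dvd_rfl
        have hxy : x = y + Pi.single 0 (n:ℤ) := by rw [hy, sub_add_cancel]
        rw [hxy]
        exact AddSubmonoid.add_mem _ (ih hyH (by rw [s00, s01]; omega))
          (AddSubmonoid.subset_closure hsingle0)
      · by_cases hb1 : (n:ℤ) < x 1
        · set y : Fin 2 → ℤ := x - Pi.single 1 (n:ℤ) with hy
          have s10 : y 0 = x 0 := by rw [hy]; simp
          have s11 : y 1 = x 1 - n := by rw [hy]; simp
          have hyH : y ∈ Hnm n m₁ := by
            refine mem_Hnm.2 ⟨⟨by omega, by omega⟩, ?_⟩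
            rw [s10, s11]
            have : x 0 + (m₁:ℤ) * (x 1 - (n:ℤ)) = (x 0 + (m₁:ℤ) * x 1) - n * m₁ := by ring
            rw [this]
            exact dvd_sub hd ⟨m₁, rfl⟩
          have hxy : x = y + Pi.single 1 (n:ℤ) := by rw [hy, sub_add_cancel]
          rw [hxy]
          exact AddSubmonoid.add_mem _ (ih hyH (by rw [s10, s11]; omega))
            (AddSubmonoid.subset_closure hsingle1)
        · exact AddSubmonoid.subset_closure (hmemS x hx (by omega) (by omega))

lemma Hnm_orth (h1 : 1 ≤ m₁) (h2 : m₁ < n) (hcop : Nat.Coprime n m₁) :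
    IsOrthogonal 2 n (Hnm n m₁) := by
  have hn : 0 < n := by omega
  have hnZ : (0:ℤ) < n := by exact_mod_cast hn
  refine ⟨Hnm_fg hn, fun x hx i => hx.1 i, single_mem_Hnm_aux hnZ,
    ⟨n, hn, fun x hx i => ⟨x i, rfl⟩⟩, ?_⟩
  intro i m' hm'0 hm'n hmem
  have hd := (mem_Hnm.1 hmem).2
  fin_cases i
  · simp [Pi.single_apply] at hd
    have : n ∣ m' := Int.natCast_dvd_natCast.mp hd
    have := Nat.le_of_dvd hm'0 this
    omega
  · simp [Pi.single_apply] at hd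
    have hd' : (n:ℤ) ∣ ((m' * m₁ : ℕ) : ℤ) := by push_cast; rw [mul_comm]; exact hd
    have : n ∣ m' * m₁ := Int.natCast_dvd_natCast.mp hd'
    have : n ∣ m' := hcop.dvd_of_dvd_mul_right this
    have := Nat.le_of_dvd hm'0 this
    omega

lemma Hnm_normal : IsNormalSg 2 (Hnm n m₁) := by
  have key : ∀ g ∈ AddSubgroup.closure ((Hnm n m₁ : Set (Fin 2 → ℤ))),
      (n:ℤ) ∣ g 0 + (m₁:ℤ) * g 1 := by
    intro g hg
    induction hg using AddSubgroup.closure_induction with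
    | mem x hx => exact (mem_Hnm.1 hx).2
    | zero => simp
    | add x y hx hy ihx ihy =>
      have : (x + y) 0 + (m₁:ℤ) * (x + y) 1
          = (x 0 + (m₁:ℤ) * x 1) + (y 0 + (m₁:ℤ) * y 1) := by
        simp [Pi.add_apply]; ring
      rw [this]; exact dvd_add ihx ihy
    | neg x hx ihx =>
      have : (-x) 0 + (m₁:ℤ) * (-x) 1 = -(x 0 + (m₁:ℤ) * x 1) := by
        simp [Pi.neg_apply]; ring
      rw [this]; exact dvd_neg.2 ihx
  intro g hg hex
  obtain ⟨n', hn'1, hn'mem⟩ := hex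
  have hdvdg := key g hg
  have hcoord := (mem_Hnm.1 hn'mem).1
  refine mem_Hnm.2 ⟨⟨?_, ?_⟩, hdvdg⟩
  · have h := hcoord.1
    have : (n' • g) 0 = (n' : ℤ) * g 0 := by simp
    rw [this] at h
    nlinarith [(by exact_mod_cast hn'1 : (1:ℤ) ≤ n')]
  · have h := hcoord.2
    have : (n' • g) 1 = (n' : ℤ) * g 1 := by simp
    rw [this] at h
    nlinarith [(by exact_mod_cast hn'1 : (1:ℤ) ≤ n')]

end MainLemmas
/-- For coprime `n > m₁ ≥ 1`, `m₂` the inverse of `m₁` mod `n` with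
`0 < m₂ < n + 1`, and `c = (m₁m₂ - 1)/n`: the semigroup
`H = {(u₁,u₂) ∈ ℕ² : u₁ + m₁u₂ ≡ 0 (mod n)}` is a normal orthogonal semigroup of order
`n`, and `H` has an AG witness iff `c ∣ m₁ - 1` and `c ∣ m₂ - 1`. -/
theorem cyclic_quotient_AG_iff (n m₁ m₂ c : ℕ)
    (h1 : 1 ≤ m₁) (h2 : m₁ < n) (hcop : Nat.Coprime n m₁)
    (hm₂pos : 0 < m₂) (hm₂lt : m₂ < n + 1)
    (hinv : m₁ * m₂ = n * c + 1) :
    IsOrthogonal 2 n (Hnm n m₁) ∧ IsNormalSg 2 (Hnm n m₁) ∧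
    ((∃ w, AGwitness 2 n (Hnm n m₁) w) ↔ (c ∣ m₁ - 1 ∧ c ∣ m₂ - 1)) := by
  have hn2 : 2 ≤ n := by omega
  have hm₂n : m₂ < n := by
    rcases Nat.lt_or_ge m₂ n with h | h
    · exact h
    · exfalso
      have hm₂eq : m₂ = n := by omega
      rw [hm₂eq] at hinv
      have h1' : n ∣ m₁ * n := ⟨m₁, mul_comm _ _⟩
      have h2' : n ∣ n * c := ⟨c, rfl⟩
      have hsub : m₁ * n - n * c = 1 := by omega
      have hd : n ∣ 1 := hsub ▸ Nat.dvd_sub h1' h2'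
      have := Nat.le_of_dvd one_pos hd
      omega
  have hnZ : (0:ℤ) < n := by exact_mod_cast (by omega : 0 < n)
  have hm₁Z : (1:ℤ) ≤ m₁ := by exact_mod_cast h1
  have hinvZ : (m₁:ℤ) * m₂ = (n:ℤ) * c + 1 := by exact_mod_cast hinv
  refine ⟨Hnm_orth h1 h2 hcop, Hnm_normal, ?_, ?_⟩
  · -- witness implies condition
    rintro ⟨w, hw⟩
    obtain ⟨k, l, hk, hl, e1, e2⟩ :=
      exists_kl_of_witness h1 h2 hcop hm₂pos hm₂n hinv w hw
    have hnne : (n:ℤ) ≠ 0 := by linarith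
    have hm1 : (n:ℤ) * m₁ = (n:ℤ) * (1 + (c:ℤ) * k) := by
      linear_combination -(m₁:ℤ) * e2 + k * hinvZ + e1
    have hm2 : (n:ℤ) * m₂ = (n:ℤ) * (1 + (c:ℤ) * l) := by
      linear_combination -(m₂:ℤ) * e1 + l * hinvZ + e2
    have hm1' : (m₁:ℤ) = 1 + (c:ℤ) * k := mul_left_cancel₀ hnne hm1
    have hm2' : (m₂:ℤ) = 1 + (c:ℤ) * l := mul_left_cancel₀ hnne hm2
    constructor
    · have hcast : ((m₁ - 1 : ℕ) : ℤ) = (m₁:ℤ) - 1 := by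
        push_cast [h1]; ring
      have : (c:ℤ) ∣ ((m₁ - 1 : ℕ) : ℤ) := ⟨k, by rw [hcast]; linarith⟩
      exact_mod_cast this
    · have hcast : ((m₂ - 1 : ℕ) : ℤ) = (m₂:ℤ) - 1 := by
        push_cast [hm₂pos]; ring
      have : (c:ℤ) ∣ ((m₂ - 1 : ℕ) : ℤ) := ⟨l, by rw [hcast]; linarith⟩
      exact_mod_cast this
  · -- condition implies witness
    rintro ⟨hc1, hc2⟩
    rcases Nat.eq_zero_or_pos c with hc0 | hcpos
    · subst hc0
      have hinv' := hinv
      rw [Nat.mul_zero, Nat.zero_add] at hinv'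
      have hm₁1 : m₁ = 1 := by
        have hd : m₁ ∣ 1 := ⟨m₂, hinv'.symm⟩
        have := Nat.le_of_dvd one_pos hd
        omega
      have hm₂1 : m₂ = 1 := by
        rw [hm₁1, one_mul] at hinv'
        exact hinv'
      refine ⟨_, witness_of h1 h2 hcop hm₂pos hm₂n hinv 1 ((n:ℤ) - 1) le_rfl
        (by push_cast; omega) ?_ ?_⟩
      · rw [hm₁1]; push_cast; ring
      · rw [hm₂1]; push_cast; ring
    · obtain ⟨k₀, hk₀⟩ := hc1
      obtain ⟨l₀, hl₀⟩ := hc2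
      have hnc : n ≤ n * c := Nat.le_mul_of_pos_right n hcpos
      have hk₀1 : 1 ≤ k₀ := by
        by_contra hc
        push_neg at hc
        have hk₀0 : k₀ = 0 := by omega
        rw [hk₀0, Nat.mul_zero] at hk₀
        have hm₁1 : m₁ = 1 := by omega
        rw [hm₁1, one_mul] at hinv
        omega
      have hl₀1 : 1 ≤ l₀ := by
        by_contra hc
        push_neg at hc
        have hl₀0 : l₀ = 0 := by omega
        rw [hl₀0, Nat.mul_zero] at hl₀
        have hm₂1 : m₂ = 1 := by omega
        rw [hm₂1, mul_one] at hinv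
        omega
      have hcne : (c:ℤ) ≠ 0 := by exact_mod_cast hcpos.ne'
      have hk₀Z : (m₁:ℤ) - 1 = (c:ℤ) * k₀ := by
        have : ((m₁ - 1 : ℕ) : ℤ) = ((c * k₀ : ℕ) : ℤ) := by rw [hk₀]
        push_cast [h1] at this
        linarith
      have hl₀Z : (m₂:ℤ) - 1 = (c:ℤ) * l₀ := by
        have : ((m₂ - 1 : ℕ) : ℤ) = ((c * l₀ : ℕ) : ℤ) := by rw [hl₀]
        push_cast [hm₂pos] at this
        linarith
      have e1 : (k₀:ℤ) + (m₁:ℤ) * l₀ = n := by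
        have h : (c:ℤ) * ((k₀:ℤ) + (m₁:ℤ) * l₀) = (c:ℤ) * n := by
          linear_combination -hk₀Z - (m₁:ℤ) * hl₀Z + hinvZ
        exact mul_left_cancel₀ hcne h
      have e2 : (l₀:ℤ) + (m₂:ℤ) * k₀ = n := by
        have h : (c:ℤ) * ((l₀:ℤ) + (m₂:ℤ) * k₀) = (c:ℤ) * n := by
          linear_combination -hl₀Z - (m₂:ℤ) * hk₀Z + hinvZ
        exact mul_left_cancel₀ hcne h
      exact ⟨_, witness_of h1 h2 hcop hm₂pos hm₂n hinv k₀ l₀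
        (by exact_mod_cast hk₀1) (by exact_mod_cast hl₀1) e1 e2⟩

end AGpaper
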